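/- For every real C, the identity 2C·ℓ_C = ∫_1^{√(1+e^{2C})} [3 + (1+u²)/u² · log(u² − 1)] · √(2C − log(u² − 1)) du holds. -/

import Mathlib

open MeasureTheory intervalIntegral Real

open Set Filter Topology

noncomputable def ell (C : ℝ) : ℝ :=
  ∫ u in (1 : ℝ)..Real.sqrt (1 + Real.exp (2 * C)),
    (Real.sqrt (2 * C - Real.log (u ^ 2 - 1)))⁻¹

namespace TwoCEll

noncomputable def ub (C : ℝ) : ℝ := Real.sqrt (1 + Real.exp (2 * C))

lemma sq_ub (C : ℝ) : ub C ^ 2 = 1 + Real.exp (2 * C) := by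
  rw [ub, sq, Real.mul_self_sqrt]; positivity

lemma one_lt_ub (C : ℝ) : 1 < ub C := by
  rw [ub]; exact (Real.lt_sqrt (by norm_num)).mpr (by nlinarith [Real.exp_pos (2*C)])

lemma mem_facts {C u : ℝ} (hu : u ∈ Ioo 1 (ub C)) :
    0 < u ^ 2 - 1 ∧ u ^ 2 - 1 < Real.exp (2 * C) ∧
      0 < 2 * C - Real.log (u ^ 2 - 1) := by
  obtain ⟨h1, h2⟩ := hu
  have hub := one_lt_ub C
  have hx : 0 < u ^ 2 - 1 := by nlinarith
  have hx2 : u ^ 2 - 1 < Real.exp (2 * C) := by nlinarith [sq_ub C]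
  refine ⟨hx, hx2, ?_⟩
  have := Real.log_lt_log hx hx2
  rw [Real.log_exp] at this
  linarith

lemma v_lower {C u : ℝ} (hu : u ∈ Ioo 1 (ub C)) :
    2 * Real.exp (-(2*C)) * (ub C - u) ≤ 2 * C - Real.log (u ^ 2 - 1) := by
  obtain ⟨hx, hx2, _⟩ := mem_facts hu
  have hlog := Real.log_le_sub_one_of_pos (show (0:ℝ) < (u^2-1) * Real.exp (-(2*C)) by positivity)
  rw [Real.log_mul (ne_of_gt hx) (Real.exp_ne_zero _), Real.log_exp] at hlog
  have key : (u^2-1) * Real.exp (-(2*C)) - 1 = -((ub C ^2 - u^2) * Real.exp (-(2*C))) := by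
    rw [sq_ub]
    have : Real.exp (2*C) * Real.exp (-(2*C)) = 1 := by
      rw [← Real.exp_add]; simp
    nlinarith [this]
  have hfac : (ub C - u) * 2 ≤ ub C ^ 2 - u ^ 2 := by
    have h1 : 1 < u := hu.1
    have h2 : u < ub C := hu.2
    nlinarith
  have he : 0 < Real.exp (-(2*C)) := Real.exp_pos _
  nlinarith

noncomputable def gg (C u : ℝ) : ℝ :=
  (u^2-1) * Real.log (u^2-1) / u * Real.sqrt (2*C - Real.log (u^2-1))

noncomputable def fd (C u : ℝ) : ℝ :=
  (3 + (1 + u ^ 2) / u ^ 2 * Real.log (u ^ 2 - 1)) *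
      Real.sqrt (2 * C - Real.log (u ^ 2 - 1)) -
    2 * C * (Real.sqrt (2 * C - Real.log (u ^ 2 - 1)))⁻¹

lemma hasDeriv_gg {C u : ℝ} (hu0 : 0 < u) (hx : 0 < u^2 - 1)
    (hv : 0 < 2*C - Real.log (u^2-1)) : HasDerivAt (gg C) (fd C u) u := by
  have hs : 0 < Real.sqrt (2*C - Real.log (u^2-1)) := Real.sqrt_pos.mpr hv
  have h1 : HasDerivAt (fun u : ℝ => u^2 - 1) (2*u) u := by
    simpa using (hasDerivAt_pow 2 u).sub_const 1
  have hL : HasDerivAt (fun u : ℝ => Real.log (u^2-1)) (2*u/(u^2-1)) u := h1.log (ne_of_gt hx)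
  have hp : HasDerivAt (fun u : ℝ => (u^2-1) * Real.log (u^2-1) / u)
      (((2*u * Real.log (u^2-1) + (u^2-1) * (2*u/(u^2-1))) * u
        - (u^2-1) * Real.log (u^2-1) * 1) / u^2) u :=
    (h1.mul hL).div (hasDerivAt_id u) (ne_of_gt hu0)
  have hvd : HasDerivAt (fun u : ℝ => 2*C - Real.log (u^2-1)) (-(2*u/(u^2-1))) u := by
    exact hL.const_sub (2*C)
  have hsq : HasDerivAt (fun u : ℝ => Real.sqrt (2*C - Real.log (u^2-1)))
      (-(2*u/(u^2-1)) / (2 * Real.sqrt (2*C - Real.log (u^2-1)))) u := hvd.sqrt (ne_of_gt hv)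
  have : HasDerivAt (gg C) _ u := hp.mul hsq
  convert this using 1
  rw [fd]
  have hss : Real.sqrt (2*C - Real.log (u^2-1)) * Real.sqrt (2*C - Real.log (u^2-1))
      = 2*C - Real.log (u^2-1) := Real.mul_self_sqrt hv.le
  set s := Real.sqrt (2*C - Real.log (u^2-1))
  set L := Real.log (u^2-1)
  have h0 : u ≠ 0 := ne_of_gt hu0
  have hx' : u^2 - 1 ≠ 0 := ne_of_gt hx
  have hs' : s ≠ 0 := ne_of_gt hs
  field_simp
  linear_combination u^2 * hss

lemma tendsto_gg_one (C : ℝ) : Tendsto (gg C) (𝓝[>] 1) (𝓝 0) := by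
  have hTin : Tendsto (fun t : ℝ => t * Real.sqrt (2*C+t) * Real.exp (-t)) atTop (𝓝 0) := by
    apply squeeze_zero_norm' (a := fun t => t^2 * Real.exp (-t) + |2*C| * (t^1 * Real.exp (-t)))
    · filter_upwards [eventually_ge_atTop (max 1 (1 - 2*C))] with t ht
      have ht1 : (1:ℝ) ≤ t := le_trans (le_max_left _ _) ht
      have ht2 : 1 - 2*C ≤ t := le_trans (le_max_right _ _) ht
      have h2C : (0:ℝ) ≤ 2*C + t := by linarith
      have hsq : Real.sqrt (2*C+t) ≤ 2*C+t := by
        nlinarith [Real.sq_sqrt h2C, Real.sqrt_nonneg (2*C+t)]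
      have he : (0:ℝ) < Real.exp (-t) := Real.exp_pos _
      rw [Real.norm_eq_abs, abs_of_nonneg (by positivity)]
      have h5 : t * Real.sqrt (2*C+t) * Real.exp (-t) ≤ t * (2*C+t) * Real.exp (-t) := by
        have ht0 : (0:ℝ) ≤ t := by linarith
        have := mul_le_mul_of_nonneg_left hsq ht0
        exact mul_le_mul_of_nonneg_right this he.le
      nlinarith [le_abs_self (2*C), mul_le_mul_of_nonneg_right
        (mul_le_mul_of_nonneg_right (le_abs_self (2*C)) (by linarith : (0:ℝ) ≤ t)) he.le]
    · have := (tendsto_pow_mul_exp_neg_atTop_nhds_zero 2).add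
        ((tendsto_pow_mul_exp_neg_atTop_nhds_zero 1).const_mul |2*C|)
      simpa using this
  have hT : Tendsto (fun t : ℝ => -(t * Real.sqrt (2*C+t) * Real.exp (-t))) atTop (𝓝 0) := by
    simpa using hTin.neg
  have hsub : Tendsto (fun x : ℝ => -Real.log x) (𝓝[>] (0:ℝ)) atTop :=
    tendsto_neg_atBot_atTop.comp Real.tendsto_log_nhdsGT_zero
  have hψ : Tendsto (fun x : ℝ => x * Real.log x * Real.sqrt (2*C - Real.log x))
      (𝓝[>] (0:ℝ)) (𝓝 0) := by
    apply (hT.comp hsub).congr'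
    filter_upwards [self_mem_nhdsWithin] with x hx
    have hx0 : (0:ℝ) < x := hx
    simp only [Function.comp_apply]
    rw [neg_neg, Real.exp_log hx0, show 2*C + -Real.log x = 2*C - Real.log x by ring]
    ring
  have hcomp : Tendsto (fun u : ℝ => u^2 - 1) (𝓝[>] (1:ℝ)) (𝓝[>] (0:ℝ)) := by
    rw [tendsto_nhdsWithin_iff]
    constructor
    · have hc : Continuous (fun u : ℝ => u^2 - 1) := (continuous_pow 2).sub continuous_const
      have h := (hc.tendsto (1:ℝ)).mono_left (nhdsWithin_le_nhds (s := Ioi (1:ℝ)))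
      simpa using h
    · filter_upwards [self_mem_nhdsWithin] with u hu
      have : (1:ℝ) < u := hu
      have : (0:ℝ) < u^2 - 1 := by nlinarith
      exact this
  have h2 := hψ.comp hcomp
  have hu : Tendsto (fun u : ℝ => u) (𝓝[>] (1:ℝ)) (𝓝 1) :=
    tendsto_id.mono_left nhdsWithin_le_nhds
  have h3 := h2.div hu one_ne_zero
  have h4 : Tendsto (fun u : ℝ =>
      (u^2-1) * Real.log (u^2-1) * Real.sqrt (2*C - Real.log (u^2-1)) / u)
      (𝓝[>] (1:ℝ)) (𝓝 0) := by rw [zero_div] at h3; exact h3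
  apply h4.congr
  intro u
  rw [gg]; ring

lemma tendsto_gg_ub (C : ℝ) : Tendsto (gg C) (𝓝[<] ub C) (𝓝 0) := by
  have hxe : ub C ^ 2 - 1 = Real.exp (2*C) := by rw [sq_ub]; ring
  have hx : (0:ℝ) < ub C ^ 2 - 1 := by rw [hxe]; positivity
  have hlog : Real.log (ub C ^ 2 - 1) = 2*C := by rw [hxe, Real.log_exp]
  have hb0 : ub C ≠ 0 := by have := one_lt_ub C; linarith
  have hpc : ContinuousAt (fun u : ℝ => u^2 - 1) (ub C) :=
    (continuous_pow 2).continuousAt.sub continuousAt_const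
  have hlc : ContinuousAt (fun u : ℝ => Real.log (u^2 - 1)) (ub C) :=
    ContinuousAt.log hpc (ne_of_gt hx)
  have hca : ContinuousAt (gg C) (ub C) := by
    apply ContinuousAt.mul
    · exact (hpc.mul hlc).div continuousAt_id hb0
    · exact Real.continuous_sqrt.continuousAt.comp (continuousAt_const.sub hlc)
  have hval : gg C (ub C) = 0 := by
    rw [gg, hlog]
    simp
  have := hca.tendsto.mono_left (nhdsWithin_le_nhds (s := Iio (ub C)))
  rwa [hval] at this

noncomputable def mm (C : ℝ) : ℝ := min ((1 + ub C)/2) (5/4)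

lemma one_lt_mm (C : ℝ) : 1 < mm C :=
  lt_min (by nlinarith [one_lt_ub C]) (by norm_num)

lemma mm_lt_ub (C : ℝ) : mm C < ub C :=
  lt_of_le_of_lt (min_le_left _ _) (by nlinarith [one_lt_ub C])

lemma mm_le (C : ℝ) : mm C ≤ 5/4 := min_le_right _ _

lemma intInt_inv_sqrt (c : ℝ) (hc : 0 ≤ c) :
    IntervalIntegrable (fun x : ℝ => (Real.sqrt x)⁻¹) volume 0 c := by
  have h : IntervalIntegrable (fun x : ℝ => x ^ (-(1/2) : ℝ)) volume 0 c :=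
    intervalIntegrable_rpow' (by norm_num)
  apply h.congr
  rw [uIoc_of_le hc]
  intro x hx
  dsimp only
  have hx0 : (0:ℝ) < x := hx.1
  rw [Real.rpow_neg hx0.le, Real.sqrt_eq_rpow]

lemma intInt_inv_sqrt_sub (a c : ℝ) (hac : a ≤ c) :
    IntervalIntegrable (fun u : ℝ => (Real.sqrt (c - u))⁻¹) volume a c := by
  have := (intInt_inv_sqrt (c - a) (by linarith)).comp_sub_left c
  simpa using this.symm

lemma intInt_inv_sqrt_sub' (a c : ℝ) (hac : a ≤ c) :
    IntervalIntegrable (fun u : ℝ => (Real.sqrt (u - a))⁻¹) volume a c := by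
  have := (intInt_inv_sqrt (c - a) (by linarith)).comp_sub_right a
  simpa using this

lemma meas_invsqrtv (C : ℝ) :
    Measurable (fun u : ℝ => (Real.sqrt (2*C - Real.log (u^2 - 1)))⁻¹) := by
  apply Measurable.inv
  exact Real.continuous_sqrt.measurable.comp
    (measurable_const.sub (Real.measurable_log.comp ((measurable_id.pow_const 2).sub_const 1)))

lemma meas_f1 (C : ℝ) :
    Measurable (fun u : ℝ => (3 + (1 + u ^ 2) / u ^ 2 * Real.log (u ^ 2 - 1)) *
      Real.sqrt (2 * C - Real.log (u ^ 2 - 1))) := by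
  have hlog : Measurable (fun u : ℝ => Real.log (u^2 - 1)) :=
    Real.measurable_log.comp ((measurable_id.pow_const 2).sub_const 1)
  exact (measurable_const.add ((measurable_const.add (measurable_id.pow_const 2)).div
    (measurable_id.pow_const 2) |>.mul hlog)).mul
    (Real.continuous_sqrt.measurable.comp (measurable_const.sub hlog))

lemma log_mm_lt (C : ℝ) : Real.log (mm C ^ 2 - 1) < 2 * C := by
  have h1 := one_lt_mm C
  have h2 := mm_lt_ub C
  have hx : 0 < mm C ^ 2 - 1 := by nlinarith
  have hx2 : mm C ^ 2 - 1 < Real.exp (2 * C) := by nlinarith [sq_ub C, one_lt_ub C]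
  have := Real.log_lt_log hx hx2
  rwa [Real.log_exp] at this

lemma I1 (C : ℝ) :
    IntervalIntegrable (fun u : ℝ => (Real.sqrt (2*C - Real.log (u^2 - 1)))⁻¹)
      volume 1 (ub C) := by
  have hmeas : AEStronglyMeasurable (fun u : ℝ => (Real.sqrt (2*C - Real.log (u^2 - 1)))⁻¹) volume := (meas_invsqrtv C).aestronglyMeasurable
  have hleft : IntervalIntegrable (fun u : ℝ => (Real.sqrt (2*C - Real.log (u^2 - 1)))⁻¹)
      volume 1 (mm C) := by
    rw [intervalIntegrable_iff_integrableOn_Ioc_of_le (one_lt_mm C).le]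
    apply Measure.integrableOn_of_bounded
      (M := (Real.sqrt (2*C - Real.log (mm C ^ 2 - 1)))⁻¹) measure_Ioc_lt_top.ne hmeas
    rw [ae_restrict_iff' measurableSet_Ioc]
    apply ae_of_all
    intro u hu
    have h1 : 1 < u := hu.1
    have h2 : u ≤ mm C := hu.2
    have hx0 : 0 < u^2 - 1 := by nlinarith
    have hxm : u^2 - 1 ≤ mm C ^ 2 - 1 := by nlinarith
    have hvm : 0 < 2*C - Real.log (mm C ^ 2 - 1) := by linarith [log_mm_lt C]
    have hv : 2*C - Real.log (mm C ^ 2 - 1) ≤ 2*C - Real.log (u^2 - 1) := by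
      have := Real.log_le_log hx0 hxm
      linarith
    rw [Real.norm_eq_abs, abs_of_nonneg (by positivity)]
    exact inv_anti₀ (Real.sqrt_pos.mpr hvm) (Real.sqrt_le_sqrt hv)
  have hright : IntervalIntegrable (fun u : ℝ => (Real.sqrt (2*C - Real.log (u^2 - 1)))⁻¹)
      volume (mm C) (ub C) := by
    rw [intervalIntegrable_iff_integrableOn_Ioo_of_le (mm_lt_ub C).le]
    have hg : IntegrableOn
        (fun u : ℝ => (Real.sqrt (2 * Real.exp (-(2*C))))⁻¹ * (Real.sqrt (ub C - u))⁻¹)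
        (Ioo (mm C) (ub C)) volume := by
      have := (intInt_inv_sqrt_sub (mm C) (ub C) (mm_lt_ub C).le).const_mul
        (Real.sqrt (2 * Real.exp (-(2*C))))⁻¹
      rwa [intervalIntegrable_iff_integrableOn_Ioo_of_le (mm_lt_ub C).le] at this
    apply Integrable.mono' hg hmeas.restrict
    rw [ae_restrict_iff' measurableSet_Ioo]
    apply ae_of_all
    intro u hu
    have hu' : u ∈ Ioo 1 (ub C) := ⟨lt_trans (one_lt_mm C) hu.1, hu.2⟩
    have hlow := v_lower hu'
    have hy : 0 < 2 * Real.exp (-(2*C)) * (ub C - u) := by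
      have h3 : 0 < ub C - u := sub_pos.mpr hu.2
      positivity
    rw [Real.norm_eq_abs, abs_of_nonneg (by positivity)]
    calc (Real.sqrt (2*C - Real.log (u^2 - 1)))⁻¹
        ≤ (Real.sqrt (2 * Real.exp (-(2*C)) * (ub C - u)))⁻¹ :=
          inv_anti₀ (Real.sqrt_pos.mpr hy) (Real.sqrt_le_sqrt hlow)
      _ = (Real.sqrt (2 * Real.exp (-(2*C))))⁻¹ * (Real.sqrt (ub C - u))⁻¹ := by
          rw [Real.sqrt_mul (by positivity) (ub C - u), mul_inv]
  exact hleft.trans hright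


noncomputable def f1 (C u : ℝ) : ℝ :=
  (3 + (1 + u ^ 2) / u ^ 2 * Real.log (u ^ 2 - 1)) *
    Real.sqrt (2 * C - Real.log (u ^ 2 - 1))

lemma sqrt_add_le' {a b : ℝ} (ha : 0 ≤ a) (hb : 0 ≤ b) :
    Real.sqrt (a + b) ≤ Real.sqrt a + Real.sqrt b := by
  have h := Real.sqrt_le_sqrt (show a + b ≤ (Real.sqrt a + Real.sqrt b)^2 by
    nlinarith [Real.sq_sqrt ha, Real.sq_sqrt hb, Real.sqrt_nonneg a, Real.sqrt_nonneg b,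
      mul_nonneg (Real.sqrt_nonneg a) (Real.sqrt_nonneg b)])
  rwa [Real.sqrt_sq (by positivity)] at h

set_option maxHeartbeats 1000000 in
lemma f1_bound {C u : ℝ} (h1 : 1 < u) (hm : u ≤ 5/4) :
    ‖f1 C u‖ ≤ (11 * Real.sqrt (2*|C|) + 55) * (Real.sqrt (u - 1))⁻¹ := by
  have hx0 : 0 < u^2 - 1 := by nlinarith
  have hx1 : u^2 - 1 ≤ 1 := by nlinarith
  set x := u^2 - 1 with hxdef
  set L := Real.log x with hLdef
  have hL0 : L ≤ 0 := Real.log_nonpos hx0.le hx1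
  have ht0 : 0 < Real.sqrt (Real.sqrt x) := Real.sqrt_pos.2 (Real.sqrt_pos.2 hx0)
  have ht2 : Real.sqrt (Real.sqrt x) * Real.sqrt (Real.sqrt x) = Real.sqrt x :=
    Real.mul_self_sqrt (Real.sqrt_nonneg x)
  have hlt : Real.log (Real.sqrt (Real.sqrt x)) = L / 4 := by
    rw [Real.log_sqrt (Real.sqrt_nonneg x), Real.log_sqrt hx0.le]; ring
  have hnegt : -Real.log (Real.sqrt (Real.sqrt x)) ≤ (Real.sqrt (Real.sqrt x))⁻¹ - 1 := by
    have h := Real.log_le_sub_one_of_pos (inv_pos.2 ht0)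
    rwa [Real.log_inv] at h
  have ht1 : Real.sqrt (Real.sqrt x) ≤ 1 := Real.sqrt_le_one.mpr (Real.sqrt_le_one.mpr hx1)
  have hts : Real.sqrt x ≤ Real.sqrt (Real.sqrt x) := by nlinarith
  have hsx0 : 0 < Real.sqrt x := Real.sqrt_pos.2 hx0
  have hti : (Real.sqrt (Real.sqrt x))⁻¹ ≤ (Real.sqrt x)⁻¹ := inv_anti₀ hsx0 hts
  have hL4 : -L ≤ 4 * (Real.sqrt x)⁻¹ := by
    have : -L = 4 * (-Real.log (Real.sqrt (Real.sqrt x))) := by rw [hlt]; ring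
    rw [this]
    have hti0 : (0:ℝ) < (Real.sqrt (Real.sqrt x))⁻¹ := inv_pos.2 ht0
    nlinarith
  have hL2 : L^2 ≤ 16 * (Real.sqrt x)⁻¹ := by
    have hlg0 : -Real.log (Real.sqrt (Real.sqrt x)) ≥ 0 := by
      have := Real.log_nonpos ht0.le ht1; linarith
    have hsq : (Real.log (Real.sqrt (Real.sqrt x)))^2 ≤ ((Real.sqrt (Real.sqrt x))⁻¹)^2 := by
      have hti0 : (0:ℝ) < (Real.sqrt (Real.sqrt x))⁻¹ := inv_pos.2 ht0
      nlinarith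
    have hinv : ((Real.sqrt (Real.sqrt x))⁻¹)^2 = (Real.sqrt x)⁻¹ := by
      rw [sq, ← mul_inv, ht2]
    have : L^2 = 16 * (Real.log (Real.sqrt (Real.sqrt x)))^2 := by rw [hlt]; ring
    rw [this]
    nlinarith
  have hw1 : 1 ≤ (Real.sqrt x)⁻¹ := by
    have h := Real.sqrt_le_one.mpr hx1
    rw [show (1:ℝ) = (1:ℝ)⁻¹ by norm_num]
    exact inv_anti₀ hsx0 h
  -- Step A
  have hc2 : (1 + u^2)/u^2 ≤ 2 := by
    rw [div_le_iff₀ (by positivity)]; nlinarith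
  have hc0 : (0:ℝ) ≤ (1 + u^2)/u^2 := by positivity
  have habsmul : |(1 + u^2)/u^2 * L| = (1 + u^2)/u^2 * (-L) := by
    rw [abs_mul, abs_of_nonneg hc0, abs_of_nonpos hL0]
  have habs : |3 + (1 + u^2)/u^2 * L| ≤ 3 + 2 * (-L) := by
    calc |3 + (1 + u^2)/u^2 * L| ≤ |(3:ℝ)| + |(1 + u^2)/u^2 * L| := abs_add_le _ _
      _ = 3 + (1 + u^2)/u^2 * (-L) := by rw [habsmul]; norm_num
      _ ≤ 3 + 2 * (-L) := by nlinarith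
  -- Step B
  have hsv : Real.sqrt (2*C - L) ≤ Real.sqrt (2*|C|) + 1 + (-L) := by
    have hstep1 : Real.sqrt (2*C - L) ≤ Real.sqrt (2*|C| + (-L)) := by
      apply Real.sqrt_le_sqrt
      have := le_abs_self C
      linarith
    have hstep2 : Real.sqrt (2*|C| + (-L)) ≤ Real.sqrt (2*|C|) + Real.sqrt (-L) :=
      sqrt_add_le' (by positivity) (by linarith)
    have hstep3 : Real.sqrt (-L) ≤ 1 + (-L) := by
      nlinarith [sq_nonneg (Real.sqrt (-L) - 1), Real.sq_sqrt (show (0:ℝ) ≤ -L by linarith),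
        Real.sqrt_nonneg (-L)]
    linarith
  -- Step C
  have hnorm : ‖f1 C u‖ ≤ (3 + 2*(-L)) * (Real.sqrt (2*|C|) + 1 + (-L)) := by
    rw [f1, Real.norm_eq_abs, abs_mul, abs_of_nonneg (Real.sqrt_nonneg _)]
    apply mul_le_mul habs hsv (Real.sqrt_nonneg _) (by linarith)
  -- Step D
  have hD : (3 + 2*(-L)) * (Real.sqrt (2*|C|) + 1 + (-L)) ≤
      (11 * Real.sqrt (2*|C|) + 55) * (Real.sqrt x)⁻¹ := by
    have ha : (0:ℝ) ≤ Real.sqrt (2*|C|) := Real.sqrt_nonneg _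
    have hpa : Real.sqrt (2*|C|) * (-L) ≤ Real.sqrt (2*|C|) * (4 * (Real.sqrt x)⁻¹) :=
      mul_le_mul_of_nonneg_left hL4 ha
    have haw : Real.sqrt (2*|C|) * 1 ≤ Real.sqrt (2*|C|) * (Real.sqrt x)⁻¹ :=
      mul_le_mul_of_nonneg_left hw1 ha
    have hpa' : Real.sqrt (2*|C|) * (-L) ≤ Real.sqrt (2*|C|) * (4 * (Real.sqrt x)⁻¹) := hpa
    calc (3 + 2*(-L)) * (Real.sqrt (2*|C|) + 1 + (-L))
        = 3*Real.sqrt (2*|C|) + 3 + 5*(-L) + 2*(Real.sqrt (2*|C|)*(-L)) + 2*L^2 := by ring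
      _ ≤ 3*(Real.sqrt (2*|C|)*(Real.sqrt x)⁻¹) + 3*(Real.sqrt x)⁻¹ + 20*(Real.sqrt x)⁻¹
            + 2*(Real.sqrt (2*|C|)*(4*(Real.sqrt x)⁻¹)) + 32*(Real.sqrt x)⁻¹ := by
          linarith [haw, hw1, hL4, hpa', hL2]
      _ = (11 * Real.sqrt (2*|C|) + 55) * (Real.sqrt x)⁻¹ := by ring
  -- Step E
  have hE : (Real.sqrt x)⁻¹ ≤ (Real.sqrt (u-1))⁻¹ := by
    apply inv_anti₀ (Real.sqrt_pos.2 (by linarith))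
    apply Real.sqrt_le_sqrt
    rw [hxdef]
    nlinarith
  calc ‖f1 C u‖ ≤ (11 * Real.sqrt (2*|C|) + 55) * (Real.sqrt x)⁻¹ := le_trans hnorm hD
    _ ≤ (11 * Real.sqrt (2*|C|) + 55) * (Real.sqrt (u-1))⁻¹ :=
      mul_le_mul_of_nonneg_left hE (by positivity)

lemma If1 (C : ℝ) : IntervalIntegrable (f1 C) volume 1 (ub C) := by
  have hmeas : AEStronglyMeasurable (f1 C) volume := (meas_f1 C).aestronglyMeasurable
  have hleft : IntervalIntegrable (f1 C) volume 1 (mm C) := by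
    rw [intervalIntegrable_iff_integrableOn_Ioo_of_le (one_lt_mm C).le]
    have hg : IntegrableOn
        (fun u : ℝ => (11 * Real.sqrt (2*|C|) + 55) * (Real.sqrt (u - 1))⁻¹)
        (Ioo 1 (mm C)) volume := by
      have := (intInt_inv_sqrt_sub' 1 (mm C) (one_lt_mm C).le).const_mul
        (11 * Real.sqrt (2*|C|) + 55)
      rwa [intervalIntegrable_iff_integrableOn_Ioo_of_le (one_lt_mm C).le] at this
    apply Integrable.mono' hg hmeas.restrict
    rw [ae_restrict_iff' measurableSet_Ioo]
    apply ae_of_all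
    intro u hu
    exact f1_bound hu.1 (le_trans hu.2.le (mm_le C))
  have hright : IntervalIntegrable (f1 C) volume (mm C) (ub C) := by
    apply ContinuousOn.intervalIntegrable
    rw [uIcc_of_le (mm_lt_ub C).le]
    intro u hu
    have h1 : 1 < u := lt_of_lt_of_le (one_lt_mm C) hu.1
    have hx : 0 < u^2 - 1 := by nlinarith
    have hu0 : u ≠ 0 := by positivity
    apply ContinuousAt.continuousWithinAt
    have hpc : ContinuousAt (fun u : ℝ => u^2 - 1) u :=
      (continuous_pow 2).continuousAt.sub continuousAt_const
    have hlc : ContinuousAt (fun u : ℝ => Real.log (u^2 - 1)) u :=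
      ContinuousAt.log hpc (ne_of_gt hx)
    apply ContinuousAt.mul
    · apply ContinuousAt.add continuousAt_const
      apply ContinuousAt.mul _ hlc
      exact (continuousAt_const.add (continuous_pow 2).continuousAt).div
        (continuous_pow 2).continuousAt (by positivity)
    · exact Real.continuous_sqrt.continuousAt.comp (continuousAt_const.sub hlc)
  exact hleft.trans hright

lemma Ifd (C : ℝ) : IntervalIntegrable (fd C) volume 1 (ub C) := by
  have h := (If1 C).sub ((I1 C).const_mul (2*C))
  apply h.congr
  intro u _
  simp [fd, f1]

lemma integral_fd_zero (C : ℝ) : ∫ u in (1:ℝ)..ub C, fd C u = 0 := by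
  have h := intervalIntegral.integral_eq_sub_of_hasDerivAt_of_tendsto (f := gg C) (f' := fd C)
    (one_lt_ub C)
    (fun u hu => hasDeriv_gg (by linarith [hu.1]) (mem_facts hu).1 (mem_facts hu).2.2)
    (Ifd C) (tendsto_gg_one C) (tendsto_gg_ub C)
  simpa using h

end TwoCEll

open TwoCEll

theorem two_C_ell_identity (C : ℝ) :
    2 * C * ell C =
      ∫ u in (1 : ℝ)..Real.sqrt (1 + Real.exp (2 * C)),
        (3 + (1 + u ^ 2) / u ^ 2 * Real.log (u ^ 2 - 1)) *
          Real.sqrt (2 * C - Real.log (u ^ 2 - 1)) := by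
  have hub : Real.sqrt (1 + Real.exp (2 * C)) = ub C := rfl
  have hsplit : (∫ u in (1:ℝ)..ub C, f1 C u) =
      (∫ u in (1:ℝ)..ub C, fd C u) +
        ∫ u in (1:ℝ)..ub C, 2*C * (Real.sqrt (2*C - Real.log (u^2 - 1)))⁻¹ := by
    rw [← intervalIntegral.integral_add (Ifd C) ((I1 C).const_mul (2*C))]
    apply intervalIntegral.integral_congr
    intro u _
    simp [fd, f1]
  have hconst : (∫ u in (1:ℝ)..ub C, 2*C * (Real.sqrt (2*C - Real.log (u^2 - 1)))⁻¹) =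
      2 * C * ell C := by
    rw [intervalIntegral.integral_const_mul, ell]
    rfl
  rw [hub]
  calc 2 * C * ell C = (∫ u in (1:ℝ)..ub C, fd C u) +
        ∫ u in (1:ℝ)..ub C, 2*C * (Real.sqrt (2*C - Real.log (u^2 - 1)))⁻¹ := by
        rw [integral_fd_zero C, hconst, zero_add]
    _ = ∫ u in (1:ℝ)..ub C, f1 C u := hsplit.symm
    _ = _ := rfl
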